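/- Let z, w, f, g ∈ ℝ^m with f ≥ 0 and g ≥ 0 entrywise, and let X ∈ ℝ^{m×m} have zero diagonal and nonpositive off-diagonal entries, such that w(z-w)ᵀ = 𝟙fᵀ + g𝟙ᵀ + X. Then: (a) for all i, w_i(z_i - w_i) ≥ 0; (b) for all i ≠ j, (w_i - w_j)((z_i - z_j) - (w_i - w_j)) ≥ 0. -/
import Mathlib


open Matrix

/-- Incremental slope[0,1] conditions follow from the dual decomposition. -/
theorem stmt_8 {m : ℕ} (z w f g : Fin m → ℝ)
    (hf : ∀ i, 0 ≤ f i) (hg : ∀ i, 0 ≤ g i)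
    (X : Matrix (Fin m) (Fin m) ℝ)
    (hXd : ∀ i, X i i = 0) (hXod : ∀ i j, i ≠ j → X i j ≤ 0)
    (heq : vecMulVec w (z - w) =
      vecMulVec (fun _ => (1 : ℝ)) f + vecMulVec g (fun _ => (1 : ℝ)) + X) :
    (∀ i, 0 ≤ w i * (z i - w i)) ∧
    (∀ i j, i ≠ j → 0 ≤ (w i - w j) * ((z i - z j) - (w i - w j))) := by
  have key : ∀ i j, w i * (z j - w j) = f j + g i + X i j := by
    intro i j
    have := congrFun (congrFun heq i) j
    simp [vecMulVec, Matrix.add_apply, Pi.sub_apply] at this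
    linarith
  constructor
  · intro i
    have := key i i
    have h := hXd i
    nlinarith [hf i, hg i]
  · intro i j hij
    have h1 := key i i
    have h2 := key i j
    have h3 := key j i
    have h4 := key j j
    have h5 := hXod i j hij
    have h6 := hXod j i (Ne.symm hij)
    have hdi := hXd i
    have hdj := hXd j
    nlinarith
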